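/- arXiv:1804.00794 — 4 statements merged into one kernel-verified Lean document; each statement's English description precedes it below -/
import Mathlib

section
/- Survival of disjoint unions. Let G be a simple directed graph on [n] with CTLN parameters in the legal range, and let σ ⊆ [n] be partitioned into nonempty sets σ_1,…,σ_N such that G|_σ is the disjoint union of the induced subgraphs G|_{σ_1},…,G|_{σ_N} (no edges of G between distinct σ_i inside σ). If σ_i ∉ FP(G) for some i ∈ [N], then σ ∉ FP(G). -/
open Matrix Finset

/-- `x` is a fixed point of the TLN `(W, b)` restricted to the subset `τ` of neurons
(coordinates outside `τ` are held at zero): for `i ∈ τ`,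
`x i = [∑_{j ∈ τ} W i j * x j + b i]_+`. -/
def IsRestFixedPoint {n : ℕ} (W : Matrix (Fin n) (Fin n) ℝ) (b : Fin n → ℝ)
    (τ : Finset (Fin n)) (x : Fin n → ℝ) : Prop :=
  (∀ i ∈ τ, x i = max 0 (∑ j ∈ τ, W i j * x j + b i)) ∧ ∀ i ∉ τ, x i = 0

/-- `σ ∈ FP(W_τ, b_τ)` : `σ` is the support of a fixed point of the restriction
of the TLN `(W, b)` to `τ`. -/
def memFP {n : ℕ} (W : Matrix (Fin n) (Fin n) ℝ) (b : Fin n → ℝ)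
    (τ σ : Finset (Fin n)) : Prop :=
  ∃ x : Fin n → ℝ, IsRestFixedPoint W b τ x ∧ ∀ i, 0 < x i ↔ i ∈ σ

/-- `det (I - W_σ)`, the determinant of the principal submatrix on `σ`. -/
noncomputable def detIW {n : ℕ} (W : Matrix (Fin n) (Fin n) ℝ) (σ : Finset (Fin n)) : ℝ :=
  ((1 : Matrix {x // x ∈ σ} {x // x ∈ σ} ℝ) - W.submatrix Subtype.val Subtype.val).det

/-- The Cramer determinant `s_i^σ := det ((I − W_{σ∪{i}})_i ; b_{σ∪{i}})`:
the matrix `I − W` restricted to `σ ∪ {i}`, with the column indexed by `i`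
replaced by `b` restricted to `σ ∪ {i}`. -/
noncomputable def cramerDet {n : ℕ} (W : Matrix (Fin n) (Fin n) ℝ) (b : Fin n → ℝ)
    (σ : Finset (Fin n)) (i : Fin n) : ℝ :=
  (Matrix.updateCol
      ((1 : Matrix {x // x ∈ insert i σ} {x // x ∈ insert i σ} ℝ)
        - W.submatrix Subtype.val Subtype.val)
      ⟨i, Finset.mem_insert_self i σ⟩ (fun p => b p.val)).det

/-- The TLN `(W, b)` is competitive. -/
def Competitive {n : ℕ} (W : Matrix (Fin n) (Fin n) ℝ) (b : Fin n → ℝ) : Prop :=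
  (∀ i j, W i j ≤ 0) ∧ (∀ i, W i i = 0) ∧ (∀ i, 0 ≤ b i)

/-- The TLN `(W, b)` is nondegenerate. -/
def Nondegenerate {n : ℕ} (W : Matrix (Fin n) (Fin n) ℝ) (b : Fin n → ℝ) : Prop :=
  (∃ i, 0 < b i) ∧ (∀ σ : Finset (Fin n), detIW W σ ≠ 0) ∧
  (∀ σ : Finset (Fin n), (∀ i ∈ σ, 0 < b i) → ∀ i ∈ σ, cramerDet W b σ i ≠ 0)

/-- The CTLN connectivity matrix of the simple directed graph `G`
(here `G j i` means there is an edge `j → i` in `G`). -/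
def ctlnW {n : ℕ} (G : Fin n → Fin n → Prop) [DecidableRel G] (ε δ : ℝ) :
    Matrix (Fin n) (Fin n) ℝ :=
  Matrix.of fun i j => if i = j then 0 else if G j i then -1 + ε else -1 - δ

/-- `k` graphically dominates `j` with respect to `σ`, in the directed graph `G`
(where `G a b` means there is an edge `a → b`). -/
def GraphDominates {α : Type*} (G : α → α → Prop) (σ : Finset α) (k j : α) : Prop :=
  (j ∈ σ ∨ k ∈ σ) ∧
  (∀ i ∈ σ, i ≠ j → i ≠ k → G i j → G i k) ∧
  (j ∈ σ → G j k) ∧ (k ∈ σ → ¬ G k j)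

/-- `w_j^σ := ∑_{i ∈ σ} (−I + W)_{j i} · |s_i^σ|`. -/
noncomputable def wval {n : ℕ} (W : Matrix (Fin n) (Fin n) ℝ) (b : Fin n → ℝ)
    (σ : Finset (Fin n)) (j : Fin n) : ℝ :=
  ∑ i ∈ σ, (W j i - if j = i then 1 else 0) * |cramerDet W b σ i|

/-- **Survival of disjoint unions.** Let `G` be a simple directed graph on `[n]` with CTLN
parameters in the legal range, and let `σ ⊆ [n]` be partitioned into nonempty sets
`σ_1, …, σ_N` such that `G|_σ` is the disjoint union of the `G|_{σ_i}` (no edges of `G`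
between distinct `σ_i`). If `σ_i ∉ FP(G)` for some `i`, then `σ ∉ FP(G)`. -/
theorem disjoint_union_survival {n N : ℕ} (G : Fin n → Fin n → Prop) [DecidableRel G]
    (hGirr : ∀ i, ¬ G i i) (ε δ θ : ℝ)
    (hθ : 0 < θ) (hδ : 0 < δ) (hε : 0 < ε) (hεδ : ε < δ / (δ + 1))
    (W : Matrix (Fin n) (Fin n) ℝ) (hWdef : W = ctlnW G ε δ)
    (b : Fin n → ℝ) (hbdef : b = fun _ => θ)
    (σ : Finset (Fin n)) (P : Fin N → Finset (Fin n))
    (hne : ∀ i, (P i).Nonempty)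
    (hdisj : ∀ i j, i ≠ j → Disjoint (P i) (P j))
    (hcover : σ = Finset.univ.biUnion P)
    (hnoedges : ∀ i j : Fin N, i ≠ j → ∀ u ∈ P i, ∀ v ∈ P j, ¬ G u v)
    (hbad : ∃ i : Fin N, ¬ memFP W b Finset.univ (P i)) :
    ¬ memFP W b Finset.univ σ := by
  subst hWdef hbdef
  rintro ⟨x, ⟨hx1, -⟩, hx3⟩
  obtain ⟨i0, hbadi⟩ := hbad
  apply hbadi; clear hbadi
  have hmax : ∀ a : ℝ, 0 < max 0 a → max 0 a = a := by
    intro a h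
    rcases le_or_gt a 0 with h' | h'
    · rw [max_eq_left h'] at h; exact absurd h (lt_irrefl 0)
    · exact max_eq_right h'.le
  set W := ctlnW G ε δ with hW
  have hWdiag : ∀ u, W u u = 0 := fun u => by simp [hW, ctlnW]
  have hε1 : ε < 1 := by
    have h1 : δ / (δ + 1) < 1 := by
      rw [div_lt_one (by linarith)]; linarith
    linarith
  have hWle : ∀ u v, W u v ≤ 0 := by
    intro u v; simp only [hW, ctlnW, Matrix.of_apply]
    split_ifs <;> linarith
  have hWlb : ∀ u v, -1 - δ ≤ W u v := by
    intro u v; simp only [hW, ctlnW, Matrix.of_apply]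
    split_ifs <;> linarith
  have hWne : ∀ u v, u ≠ v → ¬ G v u → W u v = -1 - δ := by
    intro u v h1 h2; simp [hW, ctlnW, h1, h2]
  have hxnn : ∀ j, 0 ≤ x j := fun j => by
    rw [hx1 j (Finset.mem_univ j)]; exact le_max_left _ _
  have hxzero : ∀ j, j ∉ σ → x j = 0 := by
    intro j hj
    by_contra h
    exact hj ((hx3 j).mp (lt_of_le_of_ne (hxnn j) (Ne.symm h)))
  have hxpos : ∀ j, j ∈ σ → 0 < x j := fun j hj => (hx3 j).mpr hj
  have hPσ : ∀ k, P k ⊆ σ := fun k =>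
    hcover ▸ Finset.subset_biUnion_of_mem P (Finset.mem_univ k)
  have hmem : ∀ j ∈ σ \ P i0, ∃ k, k ≠ i0 ∧ j ∈ P k := by
    intro j hj
    rw [Finset.mem_sdiff, hcover, Finset.mem_biUnion] at hj
    obtain ⟨⟨k, -, hk⟩, hj2⟩ := hj
    exact ⟨k, fun h => hj2 (h ▸ hk), hk⟩
  have hcross1 : ∀ u ∈ P i0, ∀ j ∈ σ \ P i0, W u j = -1 - δ := by
    intro u hu j hj
    obtain ⟨k, hki, hjk⟩ := hmem j hj
    refine hWne u j ?_ (hnoedges k i0 hki j hjk u hu)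
    intro h; exact (Finset.disjoint_left.mp (hdisj k i0 hki) hjk) (h ▸ hu)
  have hcross2 : ∀ u ∈ σ \ P i0, ∀ j ∈ P i0, W u j = -1 - δ := by
    intro u hu j hj
    obtain ⟨k, hki, huk⟩ := hmem u hu
    refine hWne u j ?_ (hnoedges i0 k (fun h => hki h.symm) j hj u huk)
    intro h; exact (Finset.disjoint_left.mp (hdisj k i0 hki) huk) (h ▸ hj)
  have hsum : ∀ u, ∑ j, W u j * x j
      = ∑ j ∈ P i0, W u j * x j + ∑ j ∈ σ \ P i0, W u j * x j := by
    intro u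
    rw [← Finset.sum_subset (Finset.subset_univ σ)
        (fun j _ hj => by rw [hxzero j hj, mul_zero]),
      ← Finset.sum_sdiff (hPσ i0), add_comm]
  set S : ℝ := ∑ j ∈ σ \ P i0, x j with hS
  set Si : ℝ := ∑ j ∈ P i0, x j with hSi
  have hSnn : 0 ≤ S := Finset.sum_nonneg fun j _ => hxnn j
  have hcrossval : ∀ u ∈ P i0, ∑ j ∈ σ \ P i0, W u j * x j = -(1 + δ) * S := by
    intro u hu
    rw [hS, Finset.mul_sum]
    exact Finset.sum_congr rfl fun j hj => by rw [hcross1 u hu j hj]; ring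
  obtain ⟨u0, hu0⟩ := hne i0
  have hu0σ : u0 ∈ σ := hPσ i0 hu0
  have hx0 : 0 < x u0 := hxpos u0 hu0σ
  have h1 := hx1 u0 (Finset.mem_univ u0)
  rw [hsum u0, hcrossval u0 hu0] at h1
  have hApos : ∑ j ∈ P i0, W u0 j * x j ≤ 0 :=
    Finset.sum_nonpos fun j _ => mul_nonpos_of_nonpos_of_nonneg (hWle u0 j) (hxnn j)
  have hθ'pos : 0 < θ - (1 + δ) * S := by
    have h2 : x u0 = ∑ j ∈ P i0, W u0 j * x j + -(1 + δ) * S + θ := by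
      rw [h1]; exact hmax _ (h1 ▸ hx0)
    linarith
  set θ' : ℝ := θ - (1 + δ) * S with hθ'def
  have hkey : θ ≤ (1 + δ) * Si + (1 + δ) * S := by
    have h2 := hx1 u0 (Finset.mem_univ u0)
    rw [← Finset.sum_subset (Finset.subset_univ σ)
        (fun j _ hj => by rw [hxzero j hj, mul_zero])] at h2
    have heq : x u0 = ∑ j ∈ σ, W u0 j * x j + θ := by
      rw [h2]; exact hmax _ (h2 ▸ hx0)
    have hsplit := Finset.add_sum_erase σ (fun j => W u0 j * x j) hu0σ
    have hxsplit := Finset.add_sum_erase σ (fun j => x j) hu0σ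
    have hTsum : Si + S = ∑ j ∈ σ, x j := by
      rw [hSi, hS, add_comm]; exact Finset.sum_sdiff (hPσ i0)
    have hbound : -(1 + δ) * ∑ j ∈ σ.erase u0, x j
        ≤ ∑ j ∈ σ.erase u0, W u0 j * x j := by
      rw [Finset.mul_sum]
      exact Finset.sum_le_sum fun j _ => by nlinarith [hWlb u0 j, hxnn j]
    have hd := hWdiag u0
    have hEx : ∑ j ∈ σ.erase u0, x j = Si + S - x u0 := by
      rw [hTsum]; linarith
    rw [hEx] at hbound
    rw [hd, zero_mul] at hsplit
    nlinarith [mul_nonneg hδ.le (hxnn u0)]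
  set c : ℝ := θ / θ' with hc
  have hcpos : 0 < c := div_pos hθ hθ'pos
  have hcθ : c * θ' = θ := div_mul_cancel₀ θ (ne_of_gt hθ'pos)
  refine ⟨fun u => if u ∈ P i0 then c * x u else 0,
    ⟨?_, fun u hu => absurd (Finset.mem_univ u) hu⟩, ?_⟩
  · intro u _
    have hysum : ∑ j, W u j * (if j ∈ P i0 then c * x j else 0)
        = c * ∑ j ∈ P i0, W u j * x j := by
      rw [Finset.mul_sum, ← Finset.sum_subset (Finset.subset_univ (P i0))
        (fun j _ hj => by rw [if_neg hj, mul_zero])]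
      exact Finset.sum_congr rfl fun j hj => by rw [if_pos hj]; ring
    simp only
    rw [hysum]
    by_cases hu : u ∈ P i0
    · rw [if_pos hu]
      have h2 := hx1 u (Finset.mem_univ u)
      rw [hsum u, hcrossval u hu] at h2
      rw [h2, mul_max_of_nonneg _ _ hcpos.le, mul_zero]
      congr 1
      have h3 : c * θ' = θ := hcθ
      rw [hθ'def] at h3
      linear_combination h3
    · rw [if_neg hu]
      have hA : ∑ j ∈ P i0, W u j * x j ≤ -θ' := by
        by_cases huσ : u ∈ σ
        · have huσ' : u ∈ σ \ P i0 := Finset.mem_sdiff.mpr ⟨huσ, hu⟩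
          have hval : ∑ j ∈ P i0, W u j * x j = -(1 + δ) * Si := by
            rw [hSi, Finset.mul_sum]
            exact Finset.sum_congr rfl fun j hj => by rw [hcross2 u huσ' j hj]; ring
          rw [hval, hθ'def]; linarith
        · have h2 := hx1 u (Finset.mem_univ u)
          rw [hxzero u huσ, hsum u] at h2
          have hle : ∑ j ∈ P i0, W u j * x j + ∑ j ∈ σ \ P i0, W u j * x j + θ ≤ 0 :=
            max_eq_left_iff.mp h2.symm
          have hB : -(1 + δ) * S ≤ ∑ j ∈ σ \ P i0, W u j * x j := by
            rw [hS, Finset.mul_sum]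
            exact Finset.sum_le_sum fun j _ => by nlinarith [hWlb u j, hxnn j]
          rw [hθ'def]; linarith
      symm
      apply max_eq_left
      nlinarith [hA, hcpos, hcθ]
  · intro u
    by_cases hu : u ∈ P i0
    · simp only [if_pos hu]
      exact iff_of_true (mul_pos hcpos (hxpos u (hPσ i0 hu))) hu
    · simp only [if_neg hu]
      exact iff_of_false (lt_irrefl 0) hu
end

section
/- Independent sets rule. Let G be a simple directed graph on [n] with CTLN parameters in the legal range, and let σ ⊆ [n] be a nonempty independent set (there are no edges of G between distinct nodes of σ). Then σ ∈ FP(G) if and only if every i ∈ σ is a sink of G (i has no outgoing edges in G). Furthermore, when σ ∈ FP(G): every eigenvalue of −I + W_σ has negative real part (the fixed point is stable) if and only if |σ| = 1; and sgn det(I − W_σ) = (−1)^{|σ|−1}. -/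
open Matrix Finset

lemma det_smul_one_add_smul_const {m : Type*} [Fintype m] [DecidableEq m] [Nonempty m]
    {K : Type*} [Field K] (c d : K) :
    (c • (1 : Matrix m m K) + d • (Matrix.of fun _ _ => (1 : K))).det
      = c ^ (Fintype.card m - 1) * (c + d * Fintype.card m) := by
  rcases eq_or_ne c 0 with rfl | hc
  · by_cases hs : ∃ i j : m, i ≠ j
    · obtain ⟨i, j, hij⟩ := hs
      have h2 : 2 ≤ Fintype.card m := Fintype.one_lt_card_iff.mpr ⟨i, j, hij⟩
      rw [Matrix.det_zero_of_row_eq hij (funext fun l => by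
        simp [Matrix.one_apply, Ne.symm hij, hij])]
      rw [zero_pow (by omega), zero_mul]
    · have hsub : Subsingleton m := ⟨fun a b => by by_contra h; exact hs ⟨a, b, h⟩⟩
      obtain ⟨i⟩ := (inferInstance : Nonempty m)
      have hc1 : Fintype.card m = 1 := by
        have := Fintype.card_le_one_iff_subsingleton.mpr hsub
        have := Fintype.card_pos (α := m)
        omega
      rw [Matrix.det_eq_elem_of_subsingleton _ i]
      simp [hc1, Matrix.one_apply]
  · have key : c • (1 : Matrix m m K) + d • (Matrix.of fun _ _ => (1 : K))
        = c • ((1 : Matrix m m K)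
          + Matrix.replicateCol Unit (fun _ => c⁻¹ * d) * Matrix.replicateRow Unit (fun _ => (1 : K))) := by
      ext i j
      by_cases h : i = j
      · subst h
        simp [Matrix.mul_apply, Matrix.one_apply]
        field_simp
      · simp [Matrix.mul_apply, Matrix.one_apply, h]
        field_simp
    rw [key, Matrix.det_smul, Matrix.det_one_add_replicateCol_mul_replicateRow]
    have hdot : (fun _ : m => (1:K)) ⬝ᵥ (fun _ => c⁻¹ * d) = (Fintype.card m : K) * (c⁻¹ * d) := by
      simp [dotProduct, Finset.sum_const, nsmul_eq_mul]
    rw [hdot]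
    have hk : Fintype.card m = (Fintype.card m - 1) + 1 :=
      (Nat.succ_pred_eq_of_pos Fintype.card_pos).symm
    rw [hk, pow_succ]
    field_simp
    simp only [Nat.add_sub_cancel, Nat.add_sub_cancel_left]
    ring

lemma charpoly_isRoot_iff {m : Type*} [Fintype m] [DecidableEq m]
    (M : Matrix m m ℂ) (μ : ℂ) :
    M.charpoly.IsRoot μ ↔ (μ • (1 : Matrix m m ℂ) - M).det = 0 := by
  have h : Polynomial.eval μ M.charpoly = (μ • (1 : Matrix m m ℂ) - M).det := by
    rw [Matrix.charpoly, ← Polynomial.coe_evalRingHom, RingHom.map_det]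
    congr 1
    ext i j
    by_cases h : i = j
    · subst h
      simp [Matrix.charmatrix_apply_eq, Matrix.one_apply]
    · simp [Matrix.charmatrix_apply_ne _ _ _ h, Matrix.one_apply_ne h]
  rw [Polynomial.IsRoot, h]

private theorem indep_part1 {n : ℕ} (G : Fin n → Fin n → Prop) [DecidableRel G]
    (hGirr : ∀ i, ¬ G i i) (ε δ θ : ℝ)
    (hθ : 0 < θ) (hδ : 0 < δ) (hε : 0 < ε) (hεδ : ε < δ / (δ + 1))
    (σ : Finset (Fin n)) (hσ : σ.Nonempty)
    (hindep : ∀ i ∈ σ, ∀ j ∈ σ, ¬ G i j) :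
    (memFP (ctlnW G ε δ) (fun _ => θ) Finset.univ σ ↔ ∀ i ∈ σ, ∀ k : Fin n, ¬ G i k) := by
  have hk1 : 1 ≤ σ.card := Finset.card_pos.mpr hσ
  have hWσ : ∀ i ∈ σ, ∀ j ∈ σ, ctlnW G ε δ i j = if j = i then 0 else -1 - δ := by
    intro i hi j hj
    by_cases h : j = i
    · subst h; simp [ctlnW]
    · simp only [ctlnW, Matrix.of_apply, if_neg (fun hh : i = j => h hh.symm),
        if_neg (hindep j hj i hi), if_neg h]
  constructor
  · rintro ⟨x, ⟨hfp, -⟩, hsupp⟩ i hi m hG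
    have hx0 : ∀ j, j ∉ σ → x j = 0 := by
      intro j hj
      have h1 := hfp j (Finset.mem_univ j)
      have h2 : ¬ 0 < x j := fun h => hj ((hsupp j).mp h)
      have h3 : 0 ≤ x j := h1 ▸ le_max_left _ _
      linarith [lt_or_eq_of_le h3]
    have hxpos : ∀ j ∈ σ, 0 < x j := fun j hj => (hsupp j).mpr hj
    have hsum : ∀ p : Fin n, ∑ j, ctlnW G ε δ p j * x j = ∑ j ∈ σ, ctlnW G ε δ p j * x j :=
      fun p => (Finset.sum_subset (Finset.subset_univ σ)
        (fun j _ hj => by rw [hx0 j hj, mul_zero])).symm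
    set S := ∑ j ∈ σ, x j with hS
    have hxi' : x i = ∑ j ∈ σ, ctlnW G ε δ i j * x j + θ := by
      have h := hfp i (Finset.mem_univ i); rw [hsum] at h
      rcases le_or_gt (∑ j ∈ σ, ctlnW G ε δ i j * x j + θ) 0 with hle | hlt
      · rw [max_eq_left hle] at h; exact absurd (hxpos i hi) (by rw [h]; exact lt_irrefl 0)
      · rw [max_eq_right hlt.le] at h; exact h
    have hsplit : ∑ j ∈ σ, ctlnW G ε δ i j * x j
        = ∑ j ∈ σ, ((-1 - δ) * x j + if j = i then (1 + δ) * x i else 0) := by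
      apply Finset.sum_congr rfl
      intro j hj
      rw [hWσ i hi j hj]
      by_cases h : j = i
      · subst h; simp; ring
      · simp [h]
    rw [hsplit, Finset.sum_add_distrib, Finset.sum_ite_eq' σ i, if_pos hi,
      ← Finset.mul_sum, ← hS] at hxi'
    have heqi : δ * x i = (1 + δ) * S - θ := by linarith
    by_cases hm : m ∈ σ
    · exact hindep i hi m hm hG
    have hm0 : x m = 0 := hx0 m hm
    have h := hfp m (Finset.mem_univ m); rw [hsum, hm0] at h
    have hle : ∑ j ∈ σ, ctlnW G ε δ m j * x j + θ ≤ 0 := by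
      by_contra hpos; push_neg at hpos
      rw [max_eq_right hpos.le] at h; linarith
    have hbound : ∑ j ∈ σ, ((-1 - δ) * x j + if j = i then (δ + ε) * x i else 0)
        ≤ ∑ j ∈ σ, ctlnW G ε δ m j * x j := by
      apply Finset.sum_le_sum
      intro j hj
      by_cases h : j = i
      · subst h
        have hmi : m ≠ j := fun hh => hm (hh ▸ hi)
        rw [show ctlnW G ε δ m j = -1 + ε by simp [ctlnW, hmi, hG]]
        simp; nlinarith [hxpos j hj]
      · simp only [h, if_false, add_zero]
        have hW : -1 - δ ≤ ctlnW G ε δ m j := by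
          simp only [ctlnW, Matrix.of_apply]; split_ifs <;> linarith
        exact mul_le_mul_of_nonneg_right hW (hxpos j hj).le
    rw [Finset.sum_add_distrib, Finset.sum_ite_eq' σ i, if_pos hi,
      ← Finset.mul_sum, ← hS] at hbound
    nlinarith [mul_pos hε (hxpos i hi)]
  · intro hsink
    set D : ℝ := (σ.card : ℝ) + ((σ.card : ℝ) - 1) * δ with hD
    have hkR : (1 : ℝ) ≤ (σ.card : ℝ) := by exact_mod_cast hk1
    have hDpos : 0 < D := by nlinarith
    set v := θ / D with hv
    have hvpos : 0 < v := div_pos hθ hDpos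
    have hθv : θ = D * v := by rw [hv, mul_div_cancel₀ _ hDpos.ne']
    refine ⟨fun i => if i ∈ σ then v else 0,
      ⟨?_, fun i hi => absurd (Finset.mem_univ i) hi⟩, ?_⟩
    · intro i _
      have hsum : ∑ j, ctlnW G ε δ i j * (if j ∈ σ then v else 0)
          = (∑ j ∈ σ, ctlnW G ε δ i j) * v := by
        rw [Finset.sum_mul]
        rw [← Finset.sum_subset (Finset.subset_univ σ)
          (fun j _ hj => by rw [if_neg hj, mul_zero])]
        exact Finset.sum_congr rfl fun j hj => by rw [if_pos hj]
      beta_reduce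
      by_cases hi : i ∈ σ
      · rw [if_pos hi, hsum]
        have hrow : ∑ j ∈ σ, ctlnW G ε δ i j = (-1 - δ) * σ.card + (1 + δ) := by
          have hc : ∀ j ∈ σ, ctlnW G ε δ i j = (-1 - δ) + (if j = i then (1 + δ) else 0) := by
            intro j hj; rw [hWσ i hi j hj]
            by_cases h : j = i <;> simp [h]
          rw [Finset.sum_congr rfl hc, Finset.sum_add_distrib, Finset.sum_const,
            Finset.sum_ite_eq' σ i, if_pos hi, nsmul_eq_mul]
          ring
        rw [hrow]
        have hkey : ((-1 - δ) * σ.card + (1 + δ)) * v + θ = v := by rw [hθv, hD]; ring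
        rw [hkey, max_eq_right hvpos.le]
      · rw [if_neg hi, hsum]
        have hrow : ∑ j ∈ σ, ctlnW G ε δ i j = (-1 - δ) * σ.card := by
          rw [Finset.sum_congr rfl (fun j hj => show ctlnW G ε δ i j = -1 - δ by
            simp [ctlnW, show i ≠ j from fun h => hi (h ▸ hj), hsink j hj i]),
            Finset.sum_const, nsmul_eq_mul]
          ring
        rw [hrow]
        have hkey : (-1 - δ) * σ.card * v + θ = -δ * v := by rw [hθv, hD]; ring
        rw [hkey, max_eq_left (by nlinarith)]
    · intro i; by_cases hi : i ∈ σ <;> simp [hi, hvpos]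

private theorem indep_part2 {n : ℕ} (G : Fin n → Fin n → Prop) [DecidableRel G]
    (hGirr : ∀ i, ¬ G i i) (ε δ θ : ℝ)
    (hθ : 0 < θ) (hδ : 0 < δ) (hε : 0 < ε) (hεδ : ε < δ / (δ + 1))
    (σ : Finset (Fin n)) (hσ : σ.Nonempty)
    (hindep : ∀ i ∈ σ, ∀ j ∈ σ, ¬ G i j) :
      ((∀ μ : ℂ, (Matrix.charpoly
          (((-(1 : Matrix {x // x ∈ σ} {x // x ∈ σ} ℝ)
              + (ctlnW G ε δ).submatrix Subtype.val Subtype.val)).map Complex.ofReal)).IsRoot μ →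
          μ.re < 0) ↔ σ.card = 1) ∧
      Real.sign (detIW (ctlnW G ε δ) σ) = (-1 : ℝ) ^ (σ.card - 1) := by
  have hk1 : 1 ≤ σ.card := Finset.card_pos.mpr hσ
  haveI : Nonempty {x // x ∈ σ} := ⟨⟨hσ.choose, hσ.choose_spec⟩⟩
  have hcard : Fintype.card {x // x ∈ σ} = σ.card := Fintype.card_coe σ
  have hkR : (1 : ℝ) ≤ (σ.card : ℝ) := by exact_mod_cast hk1
  have hWσ : ∀ i ∈ σ, ∀ j ∈ σ, ctlnW G ε δ i j = if j = i then 0 else -1 - δ := by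
    intro i hi j hj
    by_cases h : j = i
    · subst h; simp [ctlnW]
    · simp only [ctlnW, Matrix.of_apply, if_neg (fun hh : i = j => h hh.symm),
        if_neg (hindep j hj i hi), if_neg h]
  constructor
  · -- stability
    have hAc : ((-(1 : Matrix {x // x ∈ σ} {x // x ∈ σ} ℝ)
        + (ctlnW G ε δ).submatrix Subtype.val Subtype.val).map Complex.ofReal)
        = (δ : ℂ) • (1 : Matrix {x // x ∈ σ} {x // x ∈ σ} ℂ)
          + (-(1 + δ) : ℂ) • (Matrix.of fun _ _ => (1 : ℂ)) := by
      ext ⟨i, hi⟩ ⟨j, hj⟩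
      simp only [Matrix.map_apply, Matrix.add_apply, Matrix.neg_apply, Matrix.smul_apply,
        Matrix.submatrix_apply, Matrix.of_apply, smul_eq_mul, mul_one]
      by_cases h : i = j
      · subst h
        rw [hWσ i hi i hi, if_pos rfl, Matrix.one_apply_eq, Matrix.one_apply_eq]
        push_cast; ring
      · have hne : (⟨i, hi⟩ : {x // x ∈ σ}) ≠ ⟨j, hj⟩ := by simp [Subtype.ext_iff, h]
        rw [hWσ i hi j hj, if_neg (fun hh : j = i => h hh.symm),
          Matrix.one_apply_ne hne, Matrix.one_apply_ne hne]
        push_cast; ring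
    have hroot : ∀ μ : ℂ, (Matrix.charpoly
        (((-(1 : Matrix {x // x ∈ σ} {x // x ∈ σ} ℝ)
            + (ctlnW G ε δ).submatrix Subtype.val Subtype.val)).map Complex.ofReal)).IsRoot μ
        ↔ (μ - δ) ^ (σ.card - 1) * ((μ - δ) + (1 + δ) * σ.card) = 0 := by
      intro μ
      rw [charpoly_isRoot_iff, hAc]
      have hmat : μ • (1 : Matrix {x // x ∈ σ} {x // x ∈ σ} ℂ)
          - ((δ : ℂ) • 1 + (-(1 + δ) : ℂ) • (Matrix.of fun _ _ => (1 : ℂ)))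
          = (μ - δ) • (1 : Matrix {x // x ∈ σ} {x // x ∈ σ} ℂ)
            + ((1 : ℂ) + δ) • (Matrix.of fun _ _ => (1 : ℂ)) := by
        module
      rw [hmat, det_smul_one_add_smul_const, hcard]
    constructor
    · intro hall
      by_contra hne
      have hr : ((δ:ℂ) - δ) ^ (σ.card - 1) * (((δ:ℂ) - δ) + (1 + δ) * σ.card) = 0 := by
        rw [sub_self, zero_pow (by omega), zero_mul]
      have hd := hall δ ((hroot δ).mpr hr)
      rw [Complex.ofReal_re] at hd
      linarith
    · intro h1 μ hμ
      rw [hroot μ, h1] at hμ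
      simp only [pow_zero, one_mul, Nat.cast_one, mul_one] at hμ
      have hm1 : μ = -1 := by linear_combination hμ
      rw [hm1]
      norm_num
  · -- sign
    have hIW : (1 : Matrix {x // x ∈ σ} {x // x ∈ σ} ℝ)
        - (ctlnW G ε δ).submatrix Subtype.val Subtype.val
        = (-δ) • (1 : Matrix {x // x ∈ σ} {x // x ∈ σ} ℝ)
          + (1 + δ) • (Matrix.of fun _ _ => (1 : ℝ)) := by
      ext ⟨i, hi⟩ ⟨j, hj⟩
      simp only [Matrix.sub_apply, Matrix.add_apply, Matrix.smul_apply,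
        Matrix.submatrix_apply, Matrix.of_apply, smul_eq_mul, mul_one]
      by_cases h : i = j
      · subst h
        rw [hWσ i hi i hi, if_pos rfl]
        simp [Matrix.one_apply, Subtype.ext_iff]
      · have hne : (⟨i, hi⟩ : {x // x ∈ σ}) ≠ ⟨j, hj⟩ := by simp [Subtype.ext_iff, h]
        rw [hWσ i hi j hj, if_neg (fun hh : j = i => h hh.symm)]
        simp [Matrix.one_apply, hne]
        ring
    rw [detIW, hIW, det_smul_one_add_smul_const, hcard]
    have hpos : 0 < -δ + (1 + δ) * σ.card := by nlinarith
    rcases Nat.even_or_odd (σ.card - 1) with he | ho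
    · rw [he.neg_pow, Even.neg_one_pow he,
        Real.sign_of_pos (mul_pos (pow_pos hδ _) hpos)]
    · rw [ho.neg_pow, Odd.neg_one_pow ho,
        Real.sign_of_neg (by nlinarith [mul_pos (pow_pos hδ (σ.card - 1)) hpos])]

/-- **Independent sets rule.** Let `G` be a simple directed graph on `[n]` with CTLN
parameters in the legal range, and let `σ` be a nonempty independent set. Then
`σ ∈ FP(G)` iff every `i ∈ σ` is a sink of `G`. Furthermore, when `σ ∈ FP(G)`, the fixed
point is stable (every eigenvalue of `−I + W_σ` has negative real part) iff `|σ| = 1`,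
and `sgn det(I − W_σ) = (−1)^{|σ|−1}`. -/
theorem independent_sets_rule {n : ℕ} (G : Fin n → Fin n → Prop) [DecidableRel G]
    (hGirr : ∀ i, ¬ G i i) (ε δ θ : ℝ)
    (hθ : 0 < θ) (hδ : 0 < δ) (hε : 0 < ε) (hεδ : ε < δ / (δ + 1))
    (W : Matrix (Fin n) (Fin n) ℝ) (hWdef : W = ctlnW G ε δ)
    (b : Fin n → ℝ) (hbdef : b = fun _ => θ)
    (σ : Finset (Fin n)) (hσ : σ.Nonempty)
    (hindep : ∀ i ∈ σ, ∀ j ∈ σ, ¬ G i j) :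
    (memFP W b Finset.univ σ ↔ ∀ i ∈ σ, ∀ k : Fin n, ¬ G i k) ∧
    (memFP W b Finset.univ σ →
      ((∀ μ : ℂ, (Matrix.charpoly
          (((-(1 : Matrix {x // x ∈ σ} {x // x ∈ σ} ℝ)
              + W.submatrix Subtype.val Subtype.val)).map Complex.ofReal)).IsRoot μ →
          μ.re < 0) ↔ σ.card = 1) ∧
      Real.sign (detIW W σ) = (-1 : ℝ) ^ (σ.card - 1)) := by
  subst hWdef hbdef
  exact ⟨indep_part1 G hGirr ε δ θ hθ hδ hε hεδ σ hσ hindep,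
    fun _ => indep_part2 G hGirr ε δ θ hθ hδ hε hεδ σ hσ hindep⟩
end

section
/- Cliques rule. Let G be a simple directed graph on [n] with CTLN parameters in the legal range, and let σ ⊆ [n] be a nonempty clique (for all distinct i, j ∈ σ, both i→j and j→i in G). Then σ ∈ FP(G) if and only if σ is target-free, i.e. there is no k ∈ [n] ∖ σ with i→k for all i ∈ σ. Furthermore, when σ ∈ FP(G): every eigenvalue of −I + W_σ has negative real part (the fixed point is stable) and det(I − W_σ) > 0. -/
open Matrix Finset

open Polynomial in
lemma eval_charpoly' {ι : Type*} [DecidableEq ι] [Fintype ι] {R : Type*} [CommRing R]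
    (M : Matrix ι ι R) (μ : R) :
    M.charpoly.eval μ = (μ • (1 : Matrix ι ι R) - M).det := by
  rw [Matrix.charpoly, ← Polynomial.coe_evalRingHom, RingHom.map_det]
  congr 1
  ext i j
  by_cases h : i = j
  · subst h
    simp [Matrix.charmatrix_apply_eq, Matrix.one_apply]
  · simp [Matrix.charmatrix_apply_ne _ _ _ h, Matrix.one_apply_ne h]

lemma det_aI_add_bJ {ι : Type*} [DecidableEq ι] [Fintype ι] {F : Type*} [Field F]
    (c d : F) (hc : c ≠ 0) :
    (c • (1 : Matrix ι ι F) + d • Matrix.of (fun _ _ => (1 : F))).det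
      = c ^ (Fintype.card ι) * (1 + d / c * (Fintype.card ι)) := by
  have h1 : c • (1 : Matrix ι ι F) + d • Matrix.of (fun _ _ => (1 : F))
      = c • ((1 : Matrix ι ι F)
          + Matrix.replicateCol Unit (fun _ => d / c) * Matrix.replicateRow Unit (fun _ => (1 : F))) := by
    ext i j
    simp [Matrix.mul_apply, Matrix.one_apply, Matrix.smul_apply]
    by_cases h : i = j <;> simp [h] <;> field_simp
  rw [h1, Matrix.det_smul, Matrix.det_one_add_replicateCol_mul_replicateRow]
  congr 1
  rw [dotProduct]
  simp [Finset.card_univ]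
  ring

/-- **Cliques rule.** Let `G` be a simple directed graph on `[n]` with CTLN parameters in
the legal range, and let `σ` be a nonempty clique (all distinct `i, j ∈ σ` are
bidirectionally connected). Then `σ ∈ FP(G)` iff `σ` is target-free (no `k ∉ σ` receives
an edge from every `i ∈ σ`). Furthermore, when `σ ∈ FP(G)`, every eigenvalue of
`−I + W_σ` has negative real part (the fixed point is stable) and `det(I − W_σ) > 0`. -/
theorem cliques_rule {n : ℕ} (G : Fin n → Fin n → Prop) [DecidableRel G]
    (hGirr : ∀ i, ¬ G i i) (ε δ θ : ℝ)
    (hθ : 0 < θ) (hδ : 0 < δ) (hε : 0 < ε) (hεδ : ε < δ / (δ + 1))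
    (W : Matrix (Fin n) (Fin n) ℝ) (hWdef : W = ctlnW G ε δ)
    (b : Fin n → ℝ) (hbdef : b = fun _ => θ)
    (σ : Finset (Fin n)) (hσ : σ.Nonempty)
    (hclique : ∀ i ∈ σ, ∀ j ∈ σ, i ≠ j → G i j) :
    (memFP W b Finset.univ σ ↔ ¬ ∃ k, k ∉ σ ∧ ∀ i ∈ σ, G i k) ∧
    (memFP W b Finset.univ σ →
      (∀ μ : ℂ, (Matrix.charpoly
          (((-(1 : Matrix {x // x ∈ σ} {x // x ∈ σ} ℝ)
              + W.submatrix Subtype.val Subtype.val)).map Complex.ofReal)).IsRoot μ →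
          μ.re < 0) ∧
      0 < detIW W σ) := by
  subst hWdef hbdef
  have hδ1 : (0:ℝ) < δ + 1 := by linarith
  have hε1 : ε < 1 := lt_trans hεδ (by rw [div_lt_one hδ1]; linarith)
  have hWdiag : ∀ i, ctlnW G ε δ i i = 0 := by intro i; simp [ctlnW]
  have hWσ : ∀ i ∈ σ, ∀ j ∈ σ, i ≠ j → ctlnW G ε δ i j = -1 + ε := by
    intro i hi j hj hij
    simp only [ctlnW, Matrix.of_apply, if_neg hij, if_pos (hclique j hj i hi (Ne.symm hij))]
  have hWle : ∀ i j, i ≠ j → ctlnW G ε δ i j ≤ -1 + ε := by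
    intro i j hij
    simp only [ctlnW, Matrix.of_apply, if_neg hij]
    split <;> linarith
  have hWnt : ∀ i j, i ≠ j → ¬ G j i → ctlnW G ε δ i j = -1 - δ := by
    intro i j hij hg; simp [ctlnW, if_neg hij, hg]
  have hk1 : 1 ≤ σ.card := hσ.card_pos
  have hk1' : (1:ℝ) ≤ (σ.card : ℝ) := by exact_mod_cast hk1
  constructor
  · constructor
    · rintro ⟨x, ⟨hfix, -⟩, hsupp⟩ ⟨t, ht, htar⟩
      have hx0 : ∀ j, 0 ≤ x j := fun j => by
        rw [hfix j (Finset.mem_univ j)]; exact le_max_left _ _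
      have hxz : ∀ j, j ∉ σ → x j = 0 := fun j hj =>
        le_antisymm (not_lt.mp (mt (hsupp j).mp hj)) (hx0 j)
      have hsum : ∀ i, ∑ j, ctlnW G ε δ i j * x j = ∑ j ∈ σ, ctlnW G ε δ i j * x j := by
        intro i
        refine (Finset.sum_subset σ.subset_univ ?_).symm
        intro j _ hj; rw [hxz j hj, mul_zero]
      obtain ⟨i0, hi0⟩ := hσ
      have hxi0 : 0 < x i0 := (hsupp i0).mpr hi0
      have h1 : ∑ j ∈ σ, ctlnW G ε δ i0 j * x j
          = (-1+ε) * ((∑ j ∈ σ, x j) - x i0) := by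
        calc ∑ j ∈ σ, ctlnW G ε δ i0 j * x j
            = ctlnW G ε δ i0 i0 * x i0 + ∑ j ∈ σ.erase i0, ctlnW G ε δ i0 j * x j :=
              (Finset.add_sum_erase _ _ hi0).symm
          _ = ∑ j ∈ σ.erase i0, ((-1+ε) * x j) := by
              rw [hWdiag, zero_mul, zero_add]
              exact Finset.sum_congr rfl fun j hj => by
                rw [hWσ i0 hi0 j (Finset.mem_of_mem_erase hj)
                  (Ne.symm (Finset.ne_of_mem_erase hj))]
          _ = (-1+ε) * ((∑ j ∈ σ, x j) - x i0) := by
              rw [← Finset.mul_sum, Finset.sum_erase_eq_sub hi0]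
      have h2 := hfix i0 (Finset.mem_univ i0)
      rw [hsum i0, h1] at h2
      have h3 : x i0 = (-1+ε) * ((∑ j ∈ σ, x j) - x i0) + θ := by
        rcases le_or_gt ((-1+ε) * ((∑ j ∈ σ, x j) - x i0) + θ) 0 with h|h
        · rw [max_eq_left h] at h2; linarith
        · rw [max_eq_right h.le] at h2; exact h2
      have hkey : (-1+ε) * (∑ j ∈ σ, x j) + θ = ε * x i0 := by linear_combination -h3
      have h4 : ∑ j ∈ σ, ctlnW G ε δ t j * x j = (-1+ε) * (∑ j ∈ σ, x j) := by
        rw [Finset.mul_sum]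
        refine Finset.sum_congr rfl fun j hj => ?_
        have hne : t ≠ j := fun h => ht (h ▸ hj)
        rw [show ctlnW G ε δ t j = -1 + ε by
          simp only [ctlnW, Matrix.of_apply, if_neg hne, if_pos (htar j hj)]]
      have h5 := hfix t (Finset.mem_univ t)
      rw [hsum t, h4] at h5
      have h6 : 0 < (-1+ε) * (∑ j ∈ σ, x j) + θ := by
        rw [hkey]; exact mul_pos hε hxi0
      have h7 : 0 < x t := by
        rw [h5]; exact lt_of_lt_of_le h6 (le_max_right 0 _)
      exact ht ((hsupp t).mp h7)
    · intro hnt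
      have hnt' : ∀ t, t ∉ σ → ∃ j ∈ σ, ¬ G j t := by
        intro t ht
        by_contra h
        push_neg at h
        exact hnt ⟨t, ht, h⟩
      set k : ℝ := (σ.card : ℝ) with hk
      set D : ℝ := k - (k - 1) * ε with hD
      have hDpos : 0 < D := by nlinarith
      set c : ℝ := θ / D with hc
      have hcpos : 0 < c := div_pos hθ hDpos
      have hcD : c * D = θ := div_mul_cancel₀ θ (ne_of_gt hDpos)
      refine ⟨fun i => if i ∈ σ then c else 0, ⟨?_, fun i hi => absurd (Finset.mem_univ i) hi⟩, ?_⟩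
      · intro i _
        have hsum : ∑ j, ctlnW G ε δ i j * (if j ∈ σ then c else 0)
            = ∑ j ∈ σ, ctlnW G ε δ i j * c := by
          rw [← Finset.sum_subset σ.subset_univ (fun j _ hj => by rw [if_neg hj, mul_zero])]
          exact Finset.sum_congr rfl fun j hj => by rw [if_pos hj]
        by_cases hi : i ∈ σ
        · simp only [if_pos hi, hsum]
          have h1 : ∑ j ∈ σ, ctlnW G ε δ i j * c = (k - 1) * ((-1+ε) * c) := by
            calc ∑ j ∈ σ, ctlnW G ε δ i j * c
                = ctlnW G ε δ i i * c + ∑ j ∈ σ.erase i, ctlnW G ε δ i j * c :=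
                  (Finset.add_sum_erase _ _ hi).symm
              _ = ∑ j ∈ σ.erase i, ((-1+ε) * c) := by
                  rw [hWdiag, zero_mul, zero_add]
                  exact Finset.sum_congr rfl fun j hj => by
                    rw [hWσ i hi j (Finset.mem_of_mem_erase hj)
                      (Ne.symm (Finset.ne_of_mem_erase hj))]
              _ = (k - 1) * ((-1+ε) * c) := by
                  rw [Finset.sum_const, Finset.card_erase_of_mem hi, nsmul_eq_mul]
                  congr 1
                  rw [hk, Nat.cast_sub hk1, Nat.cast_one]
          rw [h1]
          have h2 : (k-1) * ((-1+ε)*c) + θ = c := by rw [← hcD, hD]; ring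
          rw [h2, max_eq_right hcpos.le]
        · simp only [if_neg hi, hsum]
          obtain ⟨j0, hj0σ, hj0⟩ := hnt' i hi
          have hne : ∀ j ∈ σ, i ≠ j := fun j hj h => hi (h ▸ hj)
          have hb : ∑ j ∈ σ, ctlnW G ε δ i j ≤ (-1-δ) + (k-1) * (-1+ε) := by
            calc ∑ j ∈ σ, ctlnW G ε δ i j
                = ctlnW G ε δ i j0 + ∑ j ∈ σ.erase j0, ctlnW G ε δ i j :=
                  (Finset.add_sum_erase _ _ hj0σ).symm
              _ ≤ (-1-δ) + (k-1)*(-1+ε) := by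
                  have e1 : ctlnW G ε δ i j0 = -1-δ := hWnt i j0 (hne j0 hj0σ) hj0
                  have e2 : ∑ j ∈ σ.erase j0, ctlnW G ε δ i j ≤ (σ.erase j0).card • (-1+ε) :=
                    Finset.sum_le_card_nsmul _ _ _
                      (fun j hj => hWle i j (hne j (Finset.mem_of_mem_erase hj)))
                  rw [e1]
                  refine add_le_add_right (le_trans e2 ?_) _
                  rw [Finset.card_erase_of_mem hj0σ, nsmul_eq_mul, Nat.cast_sub hk1,
                    Nat.cast_one]
          have h4 := mul_le_mul_of_nonneg_right hb hcpos.le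
          have h3 : ∑ j ∈ σ, ctlnW G ε δ i j * c + θ ≤ -(c * δ) := by
            rw [← Finset.sum_mul, ← hcD, hD]
            nlinarith
          have h5 : ∑ j ∈ σ, ctlnW G ε δ i j * c + θ ≤ 0 := by
            have := mul_pos hcpos hδ
            linarith
          exact (max_eq_left h5).symm
      · intro i
        by_cases hi : i ∈ σ
        · simp [hi, hcpos]
        · simp [hi]
  · intro _
    have hcard : Fintype.card {x // x ∈ σ} = σ.card := Fintype.card_coe σ
    have hsub : ∀ i j : {x // x ∈ σ},
        (ctlnW G ε δ).submatrix Subtype.val Subtype.val i j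
          = if i = j then 0 else -1 + ε := by
      intro i j
      by_cases h : i = j
      · subst h; simp [Matrix.submatrix_apply, hWdiag]
      · have hv : (i : Fin n) ≠ (j : Fin n) := fun hh => h (Subtype.ext hh)
        rw [if_neg h]
        exact hWσ i i.2 j j.2 hv
    constructor
    · intro μ hroot
      have hA : ((-(1 : Matrix {x // x ∈ σ} {x // x ∈ σ} ℝ)
            + (ctlnW G ε δ).submatrix Subtype.val Subtype.val)).map Complex.ofReal
          = ((-ε : ℝ) : ℂ) • (1 : Matrix {x // x ∈ σ} {x // x ∈ σ} ℂ)
            + (((-1 + ε : ℝ)) : ℂ) • Matrix.of (fun _ _ => (1:ℂ)) := by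
        ext i j
        by_cases h : i = j
        · simp only [Matrix.map_apply, Matrix.add_apply, Matrix.neg_apply, Matrix.one_apply,
            Matrix.smul_apply, Matrix.of_apply, Matrix.submatrix_apply, smul_eq_mul, if_pos h, h]
          rw [hWdiag]
          push_cast; ring
        · have hv : (i : Fin n) ≠ (j : Fin n) := fun hh => h (Subtype.ext hh)
          simp only [Matrix.map_apply, Matrix.add_apply, Matrix.neg_apply,
            Matrix.one_apply_ne h, Matrix.smul_apply, Matrix.of_apply,
            Matrix.submatrix_apply, smul_eq_mul]
          rw [hWσ i i.2 j j.2 hv]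
          push_cast; ring
      rw [Polynomial.IsRoot, eval_charpoly', hA] at hroot
      set a : ℂ := ((-ε : ℝ) : ℂ) with ha
      set bb : ℂ := (((-1 + ε : ℝ)) : ℂ) with hbb
      by_cases hμ : μ = a
      · rw [hμ, ha]
        simp only [Complex.ofReal_re]
        linarith
      · have hne : μ - a ≠ 0 := sub_ne_zero.mpr hμ
        have h1 : μ • (1 : Matrix {x // x ∈ σ} {x // x ∈ σ} ℂ)
              - (a • 1 + bb • Matrix.of (fun _ _ => (1:ℂ)))
            = (μ - a) • (1 : Matrix {x // x ∈ σ} {x // x ∈ σ} ℂ)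
              + (-bb) • Matrix.of (fun _ _ => (1:ℂ)) := by
          ext i j
          by_cases h : i = j <;>
            simp [Matrix.sub_apply, Matrix.add_apply, Matrix.one_apply, Matrix.smul_apply,
              h, smul_eq_mul] <;> ring
        rw [h1, det_aI_add_bJ _ _ hne] at hroot
        have h2 : (1 : ℂ) + (-bb)/(μ-a) * (Fintype.card {x // x ∈ σ} : ℂ) = 0 := by
          rcases mul_eq_zero.mp hroot with h|h
          · refine absurd (pow_eq_zero_iff ?_ |>.mp h) hne
            rw [hcard]
            exact Nat.one_le_iff_ne_zero.mp hk1
          · exact h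
        have h3 : μ = a + bb * (σ.card : ℂ) := by
          rw [hcard] at h2
          field_simp at h2
          linear_combination h2
        have h4 : μ = ((-ε + (-1+ε) * (σ.card : ℝ) : ℝ) : ℂ) := by
          rw [h3, ha, hbb]; push_cast; ring
        rw [h4, Complex.ofReal_re]
        nlinarith
    · have h1 : (1 : Matrix {x // x ∈ σ} {x // x ∈ σ} ℝ)
            - (ctlnW G ε δ).submatrix Subtype.val Subtype.val
          = ε • (1 : Matrix {x // x ∈ σ} {x // x ∈ σ} ℝ)
            + (1 - ε) • Matrix.of (fun _ _ => (1:ℝ)) := by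
        ext i j
        by_cases h : i = j
        · simp only [Matrix.sub_apply, Matrix.add_apply, Matrix.one_apply, Matrix.smul_apply,
            Matrix.of_apply, Matrix.submatrix_apply, smul_eq_mul, if_pos h, h]
          rw [hWdiag]
          simp
        · have hv : (i : Fin n) ≠ (j : Fin n) := fun hh => h (Subtype.ext hh)
          simp only [Matrix.sub_apply, Matrix.add_apply, Matrix.one_apply_ne h,
            Matrix.smul_apply, Matrix.of_apply, Matrix.submatrix_apply, smul_eq_mul]
          rw [hWσ i i.2 j j.2 hv]
          ring
      rw [detIW, h1, det_aI_add_bJ _ _ (ne_of_gt hε)]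
      have h2 : (0:ℝ) ≤ (1-ε)/ε * (Fintype.card {x // x ∈ σ} : ℝ) :=
        mul_nonneg (div_nonneg (by linarith) hε.le) (Nat.cast_nonneg _)
      have h3 : (0:ℝ) < 1 + (1-ε)/ε * (Fintype.card {x // x ∈ σ} : ℝ) := by linarith
      exact mul_pos (pow_pos hε _) h3
end

section
/- Cycles rule. Let G be a simple directed graph on [n] with CTLN parameters in the legal range, and let σ ⊆ [n] with |σ| = m ≥ 3 be a cycle: the vertices of σ can be enumerated v_1,…,v_m so that the edges of the induced subgraph G|_σ are exactly v_1→v_2, v_2→v_3, …, v_{m−1}→v_m, v_m→v_1. Then σ ∈ FP(G) if and only if every k ∈ [n] ∖ σ receives at most one edge from σ (|{i ∈ σ : i→k}| ≤ 1). Furthermore, when σ ∈ FP(G): the matrix −I + W_σ has an eigenvalue with positive real part (the fixed point is unstable), yet det(I − W_σ) > 0. -/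
open Matrix Finset

section CyclesRuleAux

open Fin.CommRing Fin.NatCast

lemma crule_perm_shift {m : ℕ} [NeZero m] (hm : 2 ≤ m) (π : Equiv.Perm (Fin m))
    (h : ∀ q, π q = q ∨ π q = q + 1) : π = 1 ∨ ∀ q, π q = q + 1 := by
  have h10 : (1 : Fin m) ≠ 0 := by
    have : ((1:Fin m):ℕ) = 1 := by rw [Fin.val_one']; exact Nat.mod_eq_of_lt hm
    intro hc
    rw [hc] at this; simp at this
  by_cases hid : ∀ q, π q = q
  · left; ext q; simp [hid q]
  · right
    push_neg at hid
    obtain ⟨q0, hq0⟩ := hid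
    have hq0' : π q0 = q0 + 1 := (h q0).resolve_left hq0
    have key : ∀ k : ℕ, π (q0 + (k : Fin m)) = q0 + (k : Fin m) + 1 := by
      intro k
      induction k with
      | zero => simpa using hq0'
      | succ k ih =>
        have hcast : ((k+1 : ℕ) : Fin m) = (k : Fin m) + 1 := by push_cast; ring
        rw [hcast, ← add_assoc]
        set q := q0 + (k : Fin m) + 1 with hq
        rcases h q with h1 | h1
        · exfalso
          have : π q = π (q0 + (k : Fin m)) := by rw [h1, ih]
          have := π.injective this
          rw [hq] at this
          exact h10 (left_eq_add.mp this.symm)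
        · exact h1
    intro q
    have : q = q0 + ((q - q0 : Fin m).val : Fin m) := by
      rw [Fin.cast_val_eq_self]; ring
    rw [this] at *
    exact key _

lemma crule_det_circ2 {m' : ℕ} (hm : 2 ≤ m' + 1) (x y : ℝ) :
    (Matrix.of fun p q : Fin (m'+1) =>
      (if p = q then x else 0) + (if p = q + 1 then y else 0)).det
      = x^(m'+1) + (-1)^m' * y^(m'+1) := by
  set m := m' + 1 with hmdef
  have h10 : (1 : Fin m) ≠ 0 := by
    have : ((1:Fin m):ℕ) = 1 := by rw [Fin.val_one']; exact Nat.mod_eq_of_lt hm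
    intro hc; rw [hc] at this; simp at this
  set c : Equiv.Perm (Fin m) := Equiv.addRight 1 with hc
  have hcq : ∀ q : Fin m, c q = q + 1 := fun q => rfl
  have hc1 : (1 : Equiv.Perm (Fin m)) ≠ c := by
    intro hcontr
    have : (0 : Fin m) = c 0 := by rw [← hcontr]; rfl
    rw [hcq, zero_add] at this
    exact h10 this.symm
  rw [Matrix.det_apply']
  rw [← Finset.sum_subset (Finset.subset_univ {(1 : Equiv.Perm (Fin m)), c})]
  · rw [Finset.sum_pair hc1]
    have hsign : Equiv.Perm.sign c = (-1)^m' := by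
      have : c = finRotate (m'+1) := by
        ext q
        rw [hcq, finRotate_succ_apply]
      rw [this, sign_finRotate]; rfl
    simp only [Equiv.Perm.sign_one, hsign, Equiv.Perm.one_apply, hcq]
    have t1 : ∀ q : Fin m, (Matrix.of fun p q : Fin m =>
        (if p = q then x else 0) + (if p = q + 1 then y else 0)) q q = x := by
      intro q
      have hne : q ≠ q + 1 := fun hcontr => h10 (by simpa using hcontr.symm)
      simp [Matrix.of_apply, hne]
    have t2 : ∀ q : Fin m, (Matrix.of fun p q : Fin m =>
        (if p = q then x else 0) + (if p = q + 1 then y else 0)) (q+1) q = y := by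
      intro q
      have hne : q + 1 ≠ q := fun hcontr => h10 (by simpa using hcontr)
      simp [Matrix.of_apply, hne]
    rw [Finset.prod_congr rfl (fun q _ => t1 q), Finset.prod_congr rfl (fun q _ => t2 q)]
    simp only [Finset.prod_const, Finset.card_univ, Fintype.card_fin]
    push_cast
    ring
  · intro π _ hπ
    simp only [Finset.mem_insert, Finset.mem_singleton] at hπ
    push_neg at hπ
    obtain ⟨hπ1, hπc⟩ := hπ
    by_cases hall : ∀ q, π q = q ∨ π q = q + 1
    · rcases crule_perm_shift hm π hall with h1 | h1
      · exact absurd h1 hπ1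
      · exact absurd (Equiv.ext fun q => (h1 q).trans (hcq q).symm) hπc
    · push_neg at hall
      obtain ⟨q, hq1, hq2⟩ := hall
      rw [Finset.prod_eq_zero (Finset.mem_univ q), mul_zero]
      simp [Matrix.of_apply, hq1, hq2]

lemma crule_det_circ_const {m' : ℕ} (hm : 2 ≤ m' + 1) (x y z : ℝ) (hxy : x + y ≠ 0) :
    (Matrix.of fun p q : Fin (m'+1) =>
      z + ((if p = q then x else 0) + (if p = q + 1 then y else 0))).det
      = (x^(m'+1) + (-1)^m' * y^(m'+1)) * (1 + (m'+1) * z / (x + y)) := by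
  set m := m' + 1 with hmdef
  set C : Matrix (Fin m) (Fin m) ℝ := Matrix.of fun p q =>
      (if p = q then x else 0) + (if p = q + 1 then y else 0) with hC
  set c : ℝ := z / (x + y) with hcdef
  have hCJ : ∀ p : Fin m, ∑ k, C p k = x + y := by
    intro p
    rw [hC]
    simp only [Matrix.of_apply]
    rw [Finset.sum_add_distrib]
    congr 1
    · simp
    · have : ∀ k : Fin m, (if p = k + 1 then y else 0) = (if k = p - 1 then y else 0) := by
        intro k
        congr 1
        simp only [eq_iff_iff]
        constructor
        · intro h; rw [h]; ring
        · intro h; rw [h]; ring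
      rw [Finset.sum_congr rfl (fun k _ => this k)]
      simp
  have key : C * (1 + Matrix.of (fun _ _ : Fin m => c)) =
      Matrix.of fun p q : Fin m =>
        z + ((if p = q then x else 0) + (if p = q + 1 then y else 0)) := by
    rw [Matrix.mul_add, Matrix.mul_one]
    ext p q
    simp only [Matrix.add_apply, Matrix.of_apply, Matrix.mul_apply]
    rw [← Finset.sum_mul, hCJ p]
    rw [hcdef, mul_div_assoc', mul_comm, mul_div_assoc, div_self hxy, mul_one]
    rw [hC]; simp only [Matrix.of_apply]; rw [add_comm]
  rw [← key, Matrix.det_mul]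
  have h1 : (1 + Matrix.of (fun _ _ : Fin m => c)) =
      1 + Matrix.replicateCol (Fin 1) (fun _ => c) * Matrix.replicateRow (Fin 1) (fun _ => (1:ℝ)) := by
    congr 1
    ext p q
    simp [Matrix.mul_apply]
  rw [h1]; erw [Matrix.det_one_add_replicateCol_mul_replicateRow (ι := Fin 1) (fun _ => c) (fun _ => (1:ℝ))]; rw [crule_det_circ2 hm]
  congr 1
  simp [dotProduct, hcdef]
  ring

lemma crule_charpoly_eval {ι : Type*} [Fintype ι] [DecidableEq ι] (M : Matrix ι ι ℂ) (t : ℂ) :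
    M.charpoly.eval t = (t • (1 : Matrix ι ι ℂ) - M).det := by
  rw [Matrix.charpoly, ← Polynomial.coe_evalRingHom, RingHom.map_det]
  congr 1
  ext i j
  by_cases h : i = j
  · subst h; simp [Matrix.one_apply]
  · simp [Matrix.charmatrix_apply, Matrix.one_apply, h, Matrix.diagonal_apply_ne _ h]

lemma crule_sum_ite_diag {m : ℕ} {R : Type*} [Ring R] (p : Fin m) (c : R) (f : Fin m → R) :
    ∑ q, (if p = q then c else 0) * f q = c * f p := by
  have : ∀ q : Fin m, (if p = q then c else 0) * f q = if p = q then c * f q else 0 := by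
    intro q; by_cases h : p = q <;> simp [h]
  rw [Finset.sum_congr rfl (fun q _ => this q)]
  rw [Finset.sum_ite_eq Finset.univ p (fun q => c * f q)]
  simp

lemma crule_sum_ite_shift {m : ℕ} [NeZero m] {R : Type*} [Ring R] (p : Fin m) (c : R)
    (f : Fin m → R) :
    ∑ q, (if p = q + 1 then c else 0) * f q = c * f (p - 1) := by
  have : ∀ q : Fin m, (if p = q + 1 then c else 0) * f q = if q = p - 1 then c * f q else 0 := by
    intro q
    by_cases h : p = q + 1
    · rw [if_pos h, if_pos (by rw [h]; ring)]
    · rw [if_neg h, if_neg (fun hc => h (by rw [hc]; ring)), zero_mul]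
  rw [Finset.sum_congr rfl (fun q _ => this q)]
  rw [Finset.sum_ite_eq' Finset.univ (p - 1) (fun q => c * f q)]
  simp

end CyclesRuleAux

set_option maxHeartbeats 4000000 in
/-- **Cycles rule.** Let `G` be a simple directed graph on `[n]` with CTLN parameters in
the legal range, and let `σ` with `|σ| = m ≥ 3` be a cycle: its vertices can be
enumerated `v 0, …, v (m−1)` so that the edges of `G|_σ` are exactly the consecutive ones
`v p → v (p+1)` (indices mod `m`). Then `σ ∈ FP(G)` iff every `k ∉ σ` receives at most
one edge from `σ`. Furthermore, when `σ ∈ FP(G)`, the matrix `−I + W_σ` has an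
eigenvalue with positive real part (the fixed point is unstable), yet
`det(I − W_σ) > 0`. -/
theorem cycles_rule {n m : ℕ} [NeZero m] (hm : 3 ≤ m)
    (G : Fin n → Fin n → Prop) [DecidableRel G]
    (hGirr : ∀ i, ¬ G i i) (ε δ θ : ℝ)
    (hθ : 0 < θ) (hδ : 0 < δ) (hε : 0 < ε) (hεδ : ε < δ / (δ + 1))
    (W : Matrix (Fin n) (Fin n) ℝ) (hWdef : W = ctlnW G ε δ)
    (b : Fin n → ℝ) (hbdef : b = fun _ => θ)
    (σ : Finset (Fin n)) (hcard : σ.card = m)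
    (v : Fin m → Fin n) (hvinj : Function.Injective v) (hvmem : ∀ p, v p ∈ σ)
    (hcyc : ∀ p q : Fin m, G (v p) (v q) ↔ q = p + 1) :
    (memFP W b Finset.univ σ ↔
      ∀ k ∉ σ, (σ.filter (fun i => G i k)).card ≤ 1) ∧
    (memFP W b Finset.univ σ →
      (∃ μ : ℂ, (Matrix.charpoly
          (((-(1 : Matrix {x // x ∈ σ} {x // x ∈ σ} ℝ)
              + W.submatrix Subtype.val Subtype.val)).map Complex.ofReal)).IsRoot μ ∧
          0 < μ.re) ∧
      0 < detIW W σ) := by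
  obtain ⟨m', rfl⟩ : ∃ m', m = m' + 1 := ⟨m - 1, by omega⟩
  -- parameter facts
  have hδ1 : (0:ℝ) < δ + 1 := by linarith
  have hε1 : ε < 1 := lt_trans hεδ (by rw [div_lt_one hδ1]; linarith)
  have hεδ' : ε < δ := lt_of_lt_of_le hεδ (by rw [div_le_iff₀ hδ1]; nlinarith)
  have hm2 : 2 ≤ m' + 1 := by omega
  have h10 : (1 : Fin (m'+1)) ≠ 0 := by
    have : ((1:Fin (m'+1)):ℕ) = 1 := by rw [Fin.val_one']; exact Nat.mod_eq_of_lt hm2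
    intro hc; rw [hc] at this; simp at this
  have hmR : (3:ℝ) ≤ (m' : ℝ) + 1 := by exact_mod_cast hm
  -- σ as image of v
  have hσ : Finset.image v Finset.univ = σ := by
    apply Finset.eq_of_subset_of_card_le
    · intro i hi
      obtain ⟨p, _, rfl⟩ := Finset.mem_image.mp hi
      exact hvmem p
    · rw [hcard, Finset.card_image_of_injective _ hvinj, Finset.card_univ, Fintype.card_fin]
  have hmemσ : ∀ i, i ∈ σ ↔ ∃ p, v p = i := by
    intro i; rw [← hσ]; simp
  have hsumσ : ∀ f : Fin n → ℝ, ∑ j ∈ σ, f j = ∑ q, f (v q) := by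
    intro f
    rw [← hσ, Finset.sum_image (fun a _ c _ h => hvinj h)]
  -- entries of W on the cycle
  have hWpq : ∀ p q : Fin (m'+1), W (v p) (v q)
      = -(1+δ) + ((if p = q then (1+δ) else 0) + (if p = q + 1 then (ε+δ) else 0)) := by
    intro p q
    rw [hWdef]
    show (if v p = v q then (0:ℝ) else if G (v q) (v p) then -1 + ε else -1 - δ) = _
    by_cases hpq : p = q
    · subst hpq
      rw [if_pos rfl, if_pos rfl, if_neg (fun hc : p = p + 1 => h10 (by simpa using hc.symm))]
      ring
    · have hvne : v p ≠ v q := fun h => hpq (hvinj h)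
      rw [if_neg hvne, if_neg hpq]
      by_cases he : p = q + 1
      · rw [if_pos ((hcyc q p).mpr he), if_pos he]; ring
      · rw [if_neg (fun hc => he ((hcyc q p).mp hc)), if_neg he]; ring
  -- denominator and the fixed point value
  have hden : (0:ℝ) < (1+δ) * ((m':ℝ)+1) - (2*δ+ε) := by nlinarith
  obtain ⟨cv, hcv⟩ : ∃ c : ℝ, c = θ / ((1+δ) * ((m':ℝ)+1) - (2*δ+ε)) := ⟨_, rfl⟩
  have hcvpos : 0 < cv := hcv ▸ div_pos hθ hden
  have hθcv : θ = ((1+δ) * ((m':ℝ)+1) - (2*δ+ε)) * cv := by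
    rw [hcv, mul_div_cancel₀ _ hden.ne']
  -- sum of W over σ, seen from outside
  have hWout : ∀ k, k ∉ σ → ∑ j ∈ σ, W k j
      = ((σ.filter (fun i => G i k)).card : ℝ) * (-1+ε)
        + (((m':ℝ)+1) - ((σ.filter (fun i => G i k)).card : ℝ)) * (-1-δ) := by
    intro k hk
    have hcong : ∀ j ∈ σ, W k j = if G j k then (-1+ε) else (-1-δ) := by
      intro j hj
      have hne : k ≠ j := fun h => hk (h ▸ hj)
      rw [hWdef]
      show (if k = j then (0:ℝ) else if G j k then -1 + ε else -1 - δ) = _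
      rw [if_neg hne]
    rw [Finset.sum_congr rfl hcong, Finset.sum_ite, Finset.sum_const, Finset.sum_const]
    have hdd : (σ.filter (fun i => G i k)).card + (σ.filter (fun i => ¬ G i k)).card = m' + 1 := by
      rw [Finset.card_filter_add_card_filter_not, hcard]
    have hc2 : ((σ.filter (fun i => ¬ G i k)).card : ℝ)
        = ((m':ℝ)+1) - ((σ.filter (fun i => G i k)).card : ℝ) := by
      have := congrArg (Nat.cast : ℕ → ℝ) hdd
      push_cast at this
      linarith
    rw [nsmul_eq_mul, nsmul_eq_mul, hc2]
  -- the equivalence, forward direction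
  have hfwd : memFP W b Finset.univ σ →
      ∀ k ∉ σ, (σ.filter (fun i => G i k)).card ≤ 1 := by
    rintro ⟨x, ⟨hfp, -⟩, hsupp⟩ k hk
    have hxnn : ∀ j, 0 ≤ x j := by
      intro j
      rw [hfp j (Finset.mem_univ j)]
      exact le_max_left _ _
    have hx0 : ∀ j, j ∉ σ → x j = 0 := fun j hj =>
      le_antisymm (not_lt.mp fun h => hj ((hsupp j).mp h)) (hxnn j)
    have hsum_univ : ∀ i, ∑ j, W i j * x j = ∑ j ∈ σ, W i j * x j := by
      intro i
      rw [← Finset.sum_subset (Finset.subset_univ σ)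
        (fun j _ hj => by rw [hx0 j hj, mul_zero])]
    have hxσ : ∀ i ∈ σ, x i = ∑ j ∈ σ, W i j * x j + θ := by
      intro i hi
      have h1 := hfp i (Finset.mem_univ i)
      rw [hbdef, hsum_univ i] at h1
      rcases max_choice 0 (∑ j ∈ σ, W i j * x j + θ) with hmax | hmax
      · rw [hmax] at h1
        exact absurd (h1 ▸ (hsupp i).mpr hi) (lt_irrefl 0)
      · rw [hmax] at h1; exact h1
    set y : Fin (m'+1) → ℝ := fun p => x (v p) with hy
    set S := ∑ q, y q with hS
    have hEq : ∀ p, δ * y p + (ε+δ) * y (p - 1) = (1+δ) * S - θ := by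
      intro p
      have h1 := hxσ (v p) (hvmem p)
      rw [hsumσ (fun j => W (v p) j * x j)] at h1
      have hterm : ∀ q, W (v p) (v q) * x (v q)
          = -(1+δ) * y q + ((if p = q then (1+δ) else 0) * y q
            + (if p = q + 1 then (ε+δ) else 0) * y q) := by
        intro q; rw [hWpq]; ring
      rw [Finset.sum_congr rfl (fun q _ => hterm q), Finset.sum_add_distrib,
        Finset.sum_add_distrib, crule_sum_ite_diag p ((1:ℝ)+δ) y,
        crule_sum_ite_shift p (ε+δ) y, ← Finset.mul_sum, ← hS] at h1
      have hyp : y p = x (v p) := rfl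
      rw [← hyp] at h1
      linarith
    have hstep : ∀ p : Fin (m'+1), y (p + 1) = y p := by
      set g : Fin (m'+1) → ℝ := fun p => y (p+1) - y p with hg
      have hrec : ∀ p, δ * g (p+1) = -(ε+δ) * g p := by
        intro p
        have e1 := hEq (p+1+1)
        have e2 := hEq (p+1)
        rw [add_sub_cancel_right] at e1 e2
        show δ * (y (p+1+1) - y (p+1)) = -(ε+δ) * (y (p+1) - y p)
        linarith
      obtain ⟨p0, -, hp0⟩ := Finset.exists_max_image Finset.univ (fun p => |g p|)
        ⟨0, Finset.mem_univ 0⟩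
      have habs : δ * |g (p0+1)| = (ε+δ) * |g p0| := by
        have h2 := congrArg abs (hrec p0)
        rwa [abs_mul, abs_mul, abs_of_pos hδ, abs_neg, abs_of_pos (show (0:ℝ) < ε + δ by linarith)] at h2
      have h1 : |g (p0+1)| ≤ |g p0| := hp0 _ (Finset.mem_univ _)
      have h2 : |g p0| = 0 := by nlinarith [abs_nonneg (g p0), abs_nonneg (g (p0+1))]
      intro p
      have h3 : |g p| ≤ 0 := h2 ▸ hp0 p (Finset.mem_univ p)
      have h4 : g p = 0 := abs_eq_zero.mp (le_antisymm h3 (abs_nonneg _))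
      have : y (p+1) - y p = 0 := h4
      linarith
    open Fin.CommRing Fin.NatCast in
    have hconst : ∀ p, y p = y 0 := by
      have hnat : ∀ k : ℕ, y ((k : Fin (m'+1))) = y 0 := by
        intro k
        induction k with
        | zero => simp
        | succ k ih =>
          have hc : ((k+1:ℕ) : Fin (m'+1)) = (k : Fin (m'+1)) + 1 := by push_cast; ring
          rw [hc, hstep, ih]
      intro p
      have := hnat p.val
      rwa [Fin.cast_val_eq_self] at this
    set c : ℝ := y 0 with hcdef
    have hcpos : 0 < c := (hsupp (v 0)).mpr (hvmem 0)
    have hSval : S = ((m':ℝ)+1) * c := by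
      rw [hS, Finset.sum_congr rfl (fun q _ => hconst q), Finset.sum_const,
        Finset.card_univ, Fintype.card_fin, nsmul_eq_mul]
      push_cast
      ring
    have hθc : θ = ((1+δ) * ((m':ℝ)+1) - (2*δ+ε)) * c := by
      have h1 := hEq 0
      rw [hconst (0-1), hSval] at h1
      linarith
    have hxc : ∀ j ∈ σ, x j = c := by
      intro j hj
      obtain ⟨p, rfl⟩ := (hmemσ j).mp hj
      exact hconst p
    -- the off-support condition
    have hk1 := hfp k (Finset.mem_univ k)
    rw [hbdef, hsum_univ k, hx0 k hk] at hk1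
    have hsc : ∑ j ∈ σ, W k j * x j = (∑ j ∈ σ, W k j) * c := by
      rw [Finset.sum_mul]
      exact Finset.sum_congr rfl (fun j hj => by rw [hxc j hj])
    rw [hsc, hWout k hk] at hk1
    set d : ℕ := (σ.filter (fun i => G i k)).card with hd
    have hle : ((d:ℝ) * (-1+ε) + (((m':ℝ)+1) - d) * (-1-δ)) * c + θ ≤ 0 :=
      (max_eq_left_iff.mp hk1.symm)
    rw [hθc] at hle
    by_contra hcon
    push_neg at hcon
    have hd2 : (2:ℝ) ≤ (d:ℝ) := by exact_mod_cast hcon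
    have hle2 : ((d:ℝ)*(ε+δ) - (2*δ+ε)) * c ≤ 0 := by
      have hre : ((d:ℝ)*(ε+δ) - (2*δ+ε)) * c
          = ((d:ℝ) * (-1+ε) + (((m':ℝ)+1) - d) * (-1-δ)) * c
            + ((1+δ) * ((m':ℝ)+1) - (2*δ+ε)) * c := by ring
      rw [hre]
      exact hle
    have hpos2 : 0 < (d:ℝ)*(ε+δ) - (2*δ+ε) := by
      nlinarith [mul_nonneg (sub_nonneg.mpr hd2) (show (0:ℝ) ≤ ε+δ by linarith)]
    nlinarith [mul_pos hpos2 hcpos]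
  -- the equivalence, backward direction
  have hbwd : (∀ k ∉ σ, (σ.filter (fun i => G i k)).card ≤ 1) →
      memFP W b Finset.univ σ := by
    intro hdeg
    refine ⟨fun i => if i ∈ σ then cv else 0, ⟨?_, fun i hi => absurd (Finset.mem_univ i) hi⟩,
      ?_⟩
    · intro i _
      have hsum : ∑ j, W i j * (if j ∈ σ then cv else 0) = ∑ j ∈ σ, W i j * cv := by
        have hterm0 : ∀ j, W i j * (if j ∈ σ then cv else 0)
            = if j ∈ σ then W i j * cv else 0 := by
          intro j; by_cases hj : j ∈ σ <;> simp [hj]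
        rw [Finset.sum_congr rfl (fun j _ => hterm0 j), Finset.sum_ite_mem, Finset.univ_inter]
      rw [hbdef, hsum]
      by_cases hi : i ∈ σ
      · obtain ⟨p, rfl⟩ := (hmemσ i).mp hi
        simp only [if_pos hi]
        have hterm : ∀ q, W (v p) (v q) * cv
            = -(1+δ) * cv + ((if p = q then (1+δ) else 0) * cv
              + (if p = q + 1 then (ε+δ) else 0) * cv) := by
          intro q; rw [hWpq]; ring
        have hsum2 : ∑ q, W (v p) (v q) * cv
            = -(1+δ) * ((((m':ℝ)+1)) * cv) + ((1+δ) * cv + (ε+δ) * cv) := by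
          rw [Finset.sum_congr rfl (fun q _ => hterm q), Finset.sum_add_distrib,
            Finset.sum_add_distrib, crule_sum_ite_diag p ((1:ℝ)+δ) (fun _ => cv),
            crule_sum_ite_shift p (ε+δ) (fun _ => cv), Finset.sum_const,
            Finset.card_univ, Fintype.card_fin, nsmul_eq_mul]
          push_cast; ring
        rw [hsumσ (fun j => W (v p) j * cv), hsum2]
        have hval : -(1+δ) * ((((m':ℝ)+1)) * cv) + ((1+δ) * cv + (ε+δ) * cv) + θ = cv := by
          rw [hθcv]; ring
        rw [hval, max_eq_right (le_of_lt hcvpos)]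
      · simp only [if_neg hi]
        have hsc : ∑ j ∈ σ, W i j * cv = (∑ j ∈ σ, W i j) * cv := by
          rw [Finset.sum_mul]
        rw [hsc, hWout i hi]
        have hd1 : ((σ.filter (fun j => G j i)).card : ℝ) ≤ 1 := by
          exact_mod_cast hdeg i hi
        have hd0 : (0:ℝ) ≤ ((σ.filter (fun j => G j i)).card : ℝ) := Nat.cast_nonneg _
        have hneg : (((σ.filter (fun j => G j i)).card:ℝ) * (-1+ε)
            + (((m':ℝ)+1) - ((σ.filter (fun j => G j i)).card:ℝ)) * (-1-δ)) * cv + θ ≤ 0 := by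
          rw [hθcv]
          have h1 : (((σ.filter (fun j => G j i)).card:ℝ) * (-1+ε)
              + (((m':ℝ)+1) - ((σ.filter (fun j => G j i)).card:ℝ)) * (-1-δ)) * cv
                + ((1+δ) * ((m':ℝ)+1) - (2*δ+ε)) * cv
              = (((σ.filter (fun j => G j i)).card:ℝ)*(ε+δ) - (2*δ+ε)) * cv := by ring
          rw [h1]
          have h2 : ((σ.filter (fun j => G j i)).card:ℝ)*(ε+δ) - (2*δ+ε) ≤ -δ := by
            nlinarith [mul_nonneg (sub_nonneg.mpr hd1) (show (0:ℝ) ≤ ε+δ by linarith)]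
          nlinarith [mul_pos hcvpos hδ]
        rw [max_eq_left hneg]
    · intro i
      by_cases hi : i ∈ σ
      · simp [hi, hcvpos]
      · simp [hi]
  refine ⟨⟨hfwd, hbwd⟩, fun _ => ?_⟩
  -- the bijection between Fin m and the subtype
  have hbij : Function.Bijective (fun p : Fin (m'+1) => (⟨v p, hvmem p⟩ : {x // x ∈ σ})) := by
    rw [Fintype.bijective_iff_injective_and_card]
    constructor
    · intro a b h
      exact hvinj (congrArg Subtype.val h)
    · rw [Fintype.card_coe, hcard, Fintype.card_fin]
  set e : Fin (m'+1) ≃ {x // x ∈ σ} := Equiv.ofBijective _ hbij with he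
  have hev : ∀ p, ((e p : {x // x ∈ σ}) : Fin n) = v p := fun p => rfl
  constructor
  · -- eigenvalue with positive real part
    set ω : ℂ := Complex.exp (2 * Real.pi * Complex.I / (m'+1 : ℕ)) with hω
    have hprim : IsPrimitiveRoot ω (m'+1) := Complex.isPrimitiveRoot_exp (m'+1) (by omega)
    have hω1 : ω ≠ 1 := by
      intro hc
      have := (hprim.pow_eq_one_iff_dvd 1).mp (by simpa using hc)
      have := Nat.le_of_dvd one_pos this
      omega
    have hsumω : ∑ j ∈ Finset.range (m'+1), ω ^ j = 0 := by
      have h1 := geom_sum_mul ω (m'+1)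
      rw [hprim.pow_eq_one, sub_self] at h1
      rcases mul_eq_zero.mp h1 with h2 | h2
      · exact h2
      · exact absurd (sub_eq_zero.mp h2) hω1
    have hsplit : ∑ j ∈ Finset.Ico 1 (m'+1), ω ^ j = -1 := by
      have h1 : ∑ j ∈ Finset.range (m'+1), ω ^ j
          = ω ^ 0 + ∑ j ∈ Finset.Ico 1 (m'+1), ω ^ j := by
        rw [Finset.range_eq_Ico, Finset.sum_eq_sum_Ico_succ_bot (by omega)]
      rw [hsumω] at h1
      simp only [pow_zero] at h1
      linear_combination -h1
    have hexj : ∃ j ∈ Finset.Ico 1 (m'+1), 0 < δ + (ε+δ) * (ω^j).re := by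
      by_contra hcon
      push_neg at hcon
      have hre : ∑ j ∈ Finset.Ico 1 (m'+1), (ε+δ) * (ω^j).re
          = (ε+δ) * (∑ j ∈ Finset.Ico 1 (m'+1), ω^j).re := by
        rw [Complex.re_sum, Finset.mul_sum]
      have hsum1 : ∑ j ∈ Finset.Ico 1 (m'+1), (δ + (ε+δ) * (ω^j).re)
          = (m':ℝ) * δ + (ε+δ) * (-1) := by
        rw [Finset.sum_add_distrib, Finset.sum_const, Nat.card_Ico, hre, hsplit]
        simp only [Complex.neg_re, Complex.one_re, nsmul_eq_mul]
        push_cast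
        ring
      have hsumle : ∑ j ∈ Finset.Ico 1 (m'+1), (δ + (ε+δ) * (ω^j).re) ≤ 0 :=
        Finset.sum_nonpos hcon
      rw [hsum1] at hsumle
      have hm'2 : (2:ℝ) ≤ (m':ℝ) := by exact_mod_cast (by omega : 2 ≤ m')
      nlinarith
    obtain ⟨j, hjmem, hjpos⟩ := hexj
    rw [Finset.mem_Ico] at hjmem
    set ζ : ℂ := ω ^ j with hζ
    have hζm : ζ ^ (m'+1) = 1 := by
      rw [hζ, ← pow_mul, mul_comm, pow_mul, hprim.pow_eq_one, one_pow]
    have hζ1 : ζ ≠ 1 := by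
      intro hc
      have h1 := (hprim.pow_eq_one_iff_dvd j).mp hc
      have h2 := Nat.le_of_dvd (by omega) h1
      omega
    have hpow : ∀ q : Fin (m'+1), ζ ^ ((m'+1) - q.val) = (ζ⁻¹) ^ q.val := by
      intro q
      have h1 : ζ ^ ((m'+1) - q.val) * ζ ^ q.val = 1 := by
        rw [← pow_add, Nat.sub_add_cancel (le_of_lt q.isLt), hζm]
      rw [eq_inv_of_mul_eq_one_left h1, inv_pow]
    have hsumζ : ∑ q : Fin (m'+1), ζ ^ ((m'+1) - q.val) = 0 := by
      rw [Finset.sum_congr rfl (fun q _ => hpow q)]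
      rw [Fin.sum_univ_eq_sum_range (fun i => (ζ⁻¹)^i)]
      have hinv1 : ζ⁻¹ ≠ 1 := fun hc => hζ1 (by rw [← inv_inv ζ, hc, inv_one])
      have hinvm : (ζ⁻¹) ^ (m'+1) = 1 := by rw [inv_pow, hζm, inv_one]
      have hgs := geom_sum_mul (ζ⁻¹) (m'+1)
      rw [hinvm, sub_self] at hgs
      rcases mul_eq_zero.mp hgs with hh | hh
      · exact hh
      · exact absurd (sub_eq_zero.mp hh) hinv1
    have hv1 : ((1 : Fin (m'+1)) : ℕ) = 1 := by
      rw [Fin.val_one']; exact Nat.mod_eq_of_lt hm2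
    have hshift : ∀ p : Fin (m'+1), ζ ^ ((m'+1) - ((p - 1 : Fin (m'+1))).val)
        = ζ * ζ ^ ((m'+1) - p.val) := by
      intro p
      by_cases hp : p = 0
      · subst hp
        have hs1 : ((0 - 1 : Fin (m'+1))).val = m' := by
          rw [Fin.sub_def]
          simp only [Fin.val_zero, hv1, add_zero]
          exact Nat.mod_eq_of_lt (by omega)
        have e1 : m' + 1 - m' = 1 := by omega
        rw [hs1, e1, pow_one, Fin.val_zero, Nat.sub_zero, hζm, mul_one]
      · have hpv : 1 ≤ p.val := by
          rcases Nat.eq_zero_or_pos p.val with h | h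
          · exact absurd (Fin.ext (by simp [h])) hp
          · exact h
        have hsub : ((p - 1 : Fin (m'+1))).val = p.val - 1 := by
          rw [Fin.sub_def]
          simp only [hv1]
          have h3 : m' + 1 - 1 + p.val = (p.val - 1) + (m'+1) := by omega
          rw [h3, Nat.add_mod_right]
          exact Nat.mod_eq_of_lt (by omega)
        have e2 : m' + 1 - (p.val - 1) = ((m'+1) - p.val) + 1 := by
          have := p.isLt
          omega
        rw [hsub, e2, pow_succ, mul_comm]
    set Mc := ((-(1 : Matrix {x // x ∈ σ} {x // x ∈ σ} ℝ)
        + W.submatrix Subtype.val Subtype.val)).map Complex.ofReal with hMc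
    set μ : ℂ := Complex.ofReal δ + Complex.ofReal (ε+δ) * ζ with hμ
    have hent : ∀ p q : Fin (m'+1), (μ • (1 : Matrix {x // x ∈ σ} {x // x ∈ σ} ℂ) - Mc) (e p) (e q)
        = (if p = q then μ else 0) + (((1:ℂ)+δ)
          - ((if p = q then (δ:ℂ) else 0) + (if p = q + 1 then ((ε:ℂ)+δ) else 0))) := by
      intro p q
      have hee : (e p = e q) ↔ (p = q) := EmbeddingLike.apply_eq_iff_eq e
      simp only [Matrix.sub_apply, Matrix.smul_apply, Matrix.one_apply, hMc,
        Matrix.map_apply, Matrix.add_apply, Matrix.neg_apply, Matrix.submatrix_apply,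
        smul_eq_mul]
      rw [hev p, hev q, hWpq]
      by_cases h1 : p = q
      · have h2 : ¬ p = q + 1 := fun hc => h10 (by rw [h1] at hc; simpa using hc.symm)
        rw [if_pos (hee.mpr h1), if_pos (hee.mpr h1), if_pos h1, if_pos h1, if_pos h1,
          if_neg h2, if_neg h2]
        push_cast
        ring
      · have hne := fun hc => h1 (hee.mp hc)
        by_cases h2 : p = q + 1
        · rw [if_neg hne, if_neg hne, if_neg h1, if_neg h1, if_neg h1, if_pos h2, if_pos h2]
          push_cast
          ring
        · rw [if_neg hne, if_neg hne, if_neg h1, if_neg h1, if_neg h1, if_neg h2, if_neg h2]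
          push_cast
          ring
    have key : ∀ p : Fin (m'+1),
        ((μ • (1 : Matrix {x // x ∈ σ} {x // x ∈ σ} ℂ) - Mc) *ᵥ
          (fun s => ζ ^ ((m'+1) - ((e.symm s : Fin (m'+1))).val))) (e p) = 0 := by
      intro p
      show ∑ t, (μ • (1 : Matrix {x // x ∈ σ} {x // x ∈ σ} ℂ) - Mc) (e p) t
          * ζ ^ ((m'+1) - ((e.symm t : Fin (m'+1))).val) = 0
      rw [← Equiv.sum_comp e (fun t => (μ • (1 : Matrix {x // x ∈ σ} {x // x ∈ σ} ℂ) - Mc) (e p) t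
          * ζ ^ ((m'+1) - ((e.symm t : Fin (m'+1))).val))]
      have hterm : ∀ q : Fin (m'+1),
          (μ • (1 : Matrix {x // x ∈ σ} {x // x ∈ σ} ℂ) - Mc) (e p) (e q)
            * ζ ^ ((m'+1) - ((e.symm (e q) : Fin (m'+1))).val)
          = (if p = q then μ else 0) * ζ ^ ((m'+1) - q.val)
            + (((1:ℂ)+δ) * ζ ^ ((m'+1) - q.val)
            - ((if p = q then (δ:ℂ) else 0) * ζ ^ ((m'+1) - q.val)
              + (if p = q + 1 then ((ε:ℂ)+δ) else 0) * ζ ^ ((m'+1) - q.val))) := by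
        intro q
        rw [Equiv.symm_apply_apply, hent p q]
        ring
      rw [Finset.sum_congr rfl (fun q _ => hterm q), Finset.sum_add_distrib,
        Finset.sum_sub_distrib, Finset.sum_add_distrib,
        crule_sum_ite_diag p μ (fun q : Fin (m'+1) => ζ ^ ((m'+1) - q.val)),
        crule_sum_ite_diag p ((δ:ℂ)) (fun q : Fin (m'+1) => ζ ^ ((m'+1) - q.val)),
        crule_sum_ite_shift p (((ε:ℂ)+δ)) (fun q : Fin (m'+1) => ζ ^ ((m'+1) - q.val)),
        ← Finset.mul_sum, hsumζ, mul_zero, hshift p, hμ]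
      push_cast
      ring
    refine ⟨μ, ?_, ?_⟩
    · show Polynomial.eval μ _ = 0
      rw [crule_charpoly_eval]
      rw [← Matrix.exists_mulVec_eq_zero_iff]
      refine ⟨fun s => ζ ^ ((m'+1) - ((e.symm s : Fin (m'+1))).val), ?_, ?_⟩
      · intro hc
        have hval := congrFun hc (e 0)
        rw [Equiv.symm_apply_apply] at hval
        simp only [Fin.val_zero, Nat.sub_zero, hζm, Pi.zero_apply] at hval
        exact one_ne_zero hval
      · funext s
        have hs : e (e.symm s) = s := Equiv.apply_symm_apply e s
        rw [← hs]
        rw [key (e.symm s)]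
        simp
    · rw [hμ]
      have hre2 : (Complex.ofReal δ + Complex.ofReal (ε+δ) * ζ).re
          = δ + (ε+δ) * (ω^j).re := by
        rw [hζ]
        simp [Complex.add_re, Complex.mul_re, Complex.ofReal_re, Complex.ofReal_im]
      rw [hre2]
      exact hjpos
  · -- positive determinant
    have hdetval : detIW W σ = (Matrix.of fun p q : Fin (m'+1) =>
        (1+δ) + ((if p = q then -δ else 0) + (if p = q + 1 then -(δ+ε) else 0))).det := by
      rw [detIW, ← Matrix.det_submatrix_equiv_self e]
      congr 1
      ext p q
      simp only [Matrix.submatrix_apply, Matrix.sub_apply, Matrix.one_apply, Matrix.of_apply]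
      have hee : (e p = e q) ↔ (p = q) := EmbeddingLike.apply_eq_iff_eq e
      rw [hev p, hev q, hWpq]
      by_cases h1 : p = q
      · have h2 : ¬ p = q + 1 := fun hc => h10 (by rw [h1] at hc; simpa using hc.symm)
        rw [if_pos (hee.mpr h1), if_pos h1, if_pos h1, if_neg h2, if_neg h2]; ring
      · by_cases h2 : p = q + 1
        · rw [if_neg (fun hc => h1 (hee.mp hc)), if_neg h1, if_neg h1, if_pos h2, if_pos h2]
          ring
        · rw [if_neg (fun hc => h1 (hee.mp hc)), if_neg h1, if_neg h1, if_neg h2, if_neg h2]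
          ring
    rw [hdetval, crule_det_circ_const hm2 (-δ) (-(δ+ε)) (1+δ) (by intro hc; nlinarith)]
    have hF1 : (-δ)^(m'+1) + (-1)^m' * (-(δ+ε))^(m'+1) = (-δ)^(m'+1) - (δ+ε)^(m'+1) := by
      rw [neg_pow (δ+ε) (m'+1)]
      have : ((-1:ℝ))^m' * ((-1:ℝ))^(m'+1) = -1 := by
        rw [← pow_add]
        exact Odd.neg_one_pow ⟨m', by omega⟩
      calc (-δ)^(m'+1) + (-1)^m' * ((-1)^(m'+1) * (δ+ε)^(m'+1))
          = (-δ)^(m'+1) + ((-1:ℝ))^m' * ((-1:ℝ))^(m'+1) * (δ+ε)^(m'+1) := by ring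
        _ = (-δ)^(m'+1) - (δ+ε)^(m'+1) := by rw [this]; ring
    rw [hF1]
    have hF1neg : (-δ)^(m'+1) - (δ+ε)^(m'+1) < 0 := by
      have h1 : (-δ)^(m'+1) ≤ δ^(m'+1) := by
        calc (-δ)^(m'+1) ≤ |(-δ)^(m'+1)| := le_abs_self _
          _ = |(-δ)|^(m'+1) := by rw [abs_pow]
          _ = δ^(m'+1) := by rw [abs_neg, abs_of_pos hδ]
      have h2 : δ^(m'+1) < (δ+ε)^(m'+1) := by
        apply pow_lt_pow_left₀ (by linarith) (le_of_lt hδ)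
        omega
      linarith
    have hF2neg : 1 + ((m':ℝ)+1) * (1+δ) / (-δ + -(δ+ε)) < 0 := by
      have hs : -δ + -(δ+ε) = -(2*δ+ε) := by ring
      rw [hs, div_neg]
      have h2 : (0:ℝ) < 2*δ+ε := by linarith
      have h3 : 1 < ((m':ℝ)+1) * (1+δ) / (2*δ+ε) := by
        rw [lt_div_iff₀ h2]
        push_cast
        nlinarith
      linarith
    exact mul_pos_of_neg_of_neg hF1neg hF2neg
end
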